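/- If g : [0,∞) → ℝ is monotone nondecreasing, then for any probability densities p, q with respect to μ, δ_g(Q,P) ≥ |δ_{|g|}(Q,P)| ≥ 0, where δ_h(Q,P) := ∫ (q - p)·h(q/p) dμ. -/

import Mathlib

open Set MeasureTheory

theorem delta_divergence_abs_refinement
    {X : Type*} [MeasurableSpace X] (μ : Measure X)
    (p q : X → ℝ) (g : ℝ → ℝ)
    (hp0 : ∀ x, 0 ≤ p x) (hq0 : ∀ x, 0 ≤ q x)
    (hppos : ∀ᵐ x ∂μ, 0 < p x)
    (hpm : Measurable p) (hqm : Measurable q) (hgm : Measurable g)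
    (hp : Integrable p μ) (hq : Integrable q μ)
    (hp1 : ∫ x, p x ∂μ = 1) (hq1 : ∫ x, q x ∂μ = 1)
    (hg : MonotoneOn g (Ici 0))
    (hint : Integrable (fun x => (q x - p x) * g (q x / p x)) μ)
    (hint2 : Integrable (fun x => (q x - p x) * |g (q x / p x)|) μ) :
    |∫ x, (q x - p x) * |g (q x / p x)| ∂μ| ≤
      ∫ x, (q x - p x) * g (q x / p x) ∂μ := by
  have hqp : Integrable (fun x => q x - p x) μ := hq.sub hp
  have hzero : ∀ d : ℝ, ∫ x, (q x - p x) * d ∂μ = 0 := by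
    intro d
    rw [integral_mul_const, integral_sub hq hp, hq1, hp1]
    ring
  have hptwise : ∀ᵐ x ∂μ,
      |(q x - p x) * (|g (q x / p x)| - |g 1|)| ≤
        (q x - p x) * (g (q x / p x) - g 1) := by
    filter_upwards [hppos] with x hx
    have ht0 : (0:ℝ) ≤ q x / p x := div_nonneg (hq0 x) hx.le
    have hsign : 0 ≤ (q x - p x) * (g (q x / p x) - g 1) := by
      rcases le_total 1 (q x / p x) with h1 | h1
      · have hpq : p x ≤ q x := by
          rw [le_div_iff₀ hx, one_mul] at h1; exact h1
        have := hg (mem_Ici.2 (by norm_num : (0:ℝ) ≤ 1)) (mem_Ici.2 ht0) h1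
        apply mul_nonneg <;> linarith
      · have hpq : q x ≤ p x := by
          rw [div_le_iff₀ hx, one_mul] at h1; exact h1
        have := hg (mem_Ici.2 ht0) (mem_Ici.2 (by norm_num : (0:ℝ) ≤ 1)) h1
        nlinarith [this]
    have heq : (q x - p x) * (g (q x / p x) - g 1)
        = |q x - p x| * |g (q x / p x) - g 1| := by
      rw [← abs_mul, abs_of_nonneg hsign]
    rw [abs_mul, heq]
    exact mul_le_mul_of_nonneg_left (abs_abs_sub_abs_le_abs_sub _ _) (abs_nonneg _)
  have hI1 : Integrable (fun x => (q x - p x) * (g (q x / p x) - g 1)) μ := by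
    have := hint.sub (hqp.mul_const (g 1))
    simpa [mul_sub, Pi.sub_def] using this
  have hI2 : Integrable (fun x => (q x - p x) * (|g (q x / p x)| - |g 1|)) μ := by
    have := hint2.sub (hqp.mul_const |g 1|)
    simpa [mul_sub, Pi.sub_def] using this
  have e1 : ∫ x, (q x - p x) * (g (q x / p x) - g 1) ∂μ
      = ∫ x, (q x - p x) * g (q x / p x) ∂μ := by
    simp only [mul_sub]
    rw [integral_sub hint (hqp.mul_const (g 1)), hzero (g 1), sub_zero]
  have e2 : ∫ x, (q x - p x) * (|g (q x / p x)| - |g 1|) ∂μ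
      = ∫ x, (q x - p x) * |g (q x / p x)| ∂μ := by
    simp only [mul_sub]
    rw [integral_sub hint2 (hqp.mul_const |g 1|), hzero |g 1|, sub_zero]
  calc |∫ x, (q x - p x) * |g (q x / p x)| ∂μ|
      = |∫ x, (q x - p x) * (|g (q x / p x)| - |g 1|) ∂μ| := by rw [e2]
    _ ≤ ∫ x, |(q x - p x) * (|g (q x / p x)| - |g 1|)| ∂μ := by
        simpa only [Real.norm_eq_abs] using
          norm_integral_le_integral_norm
            (fun x => (q x - p x) * (|g (q x / p x)| - |g 1|)) (μ := μ)
    _ ≤ ∫ x, (q x - p x) * (g (q x / p x) - g 1) ∂μ :=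
        integral_mono_ae hI2.abs hI1 hptwise
    _ = ∫ x, (q x - p x) * g (q x / p x) ∂μ := e1
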